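/- Let σ be a relational vocabulary, 𝒜 a finite σ-structure, and k ≥ 1. There is a bijective correspondence between P_k-coalgebras α : 𝒜 → P_k 𝒜 and k-pebble forest covers of the Gaifman graph 𝒢(𝒜) with universe A. -/

import Mathlib

/-- A relational vocabulary: a type of relation symbols with arities. -/
structure RelVocab : Type 1 where
  Rel : Type
  ar : Rel → ℕ

/-- A structure for a relational vocabulary. -/
structure RelStruct (σ : RelVocab) : Type 1 where
  carrier : Type
  rel : ∀ R : σ.Rel, (Fin (σ.ar R) → carrier) → Prop

/-- Homomorphisms of relational structures. -/
def IsHom {σ : RelVocab} (𝒜 ℬ : RelStruct σ) (h : 𝒜.carrier → ℬ.carrier) : Prop :=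
  ∀ (R : σ.Rel) (v : Fin (σ.ar R) → 𝒜.carrier), 𝒜.rel R v → ℬ.rel R (fun i => h (v i))

/-- Nonempty sequences of (pebble index, element) pairs: the universe of `P_k 𝒜`. -/
def PkC (k : ℕ) (A : Type) : Type :=
  {l : List (Fin k × A) // l ≠ []}

/-- The last move of a play. -/
def plast {k : ℕ} {A : Type} (s : PkC k A) : Fin k × A :=
  s.1.getLast s.2

/-- The counit: the element of the last move. -/
def peps {k : ℕ} {A : Type} (s : PkC k A) : A :=
  (plast s).2

/-- Comparability in the prefix order. -/
def Cmp {A : Type} (s t : List A) : Prop :=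
  s <+: t ∨ t <+: s

/-- The pebbling comonad `P_k` on structures. -/
def Pk {σ : RelVocab} (k : ℕ) (𝒜 : RelStruct σ) : RelStruct σ where
  carrier := PkC k 𝒜.carrier
  rel R v :=
    (∀ i j, Cmp (v i).1 (v j).1) ∧
    (∀ i j (u : List (Fin k × 𝒜.carrier)), (v j).1 = (v i).1 ++ u →
      (plast (v i)).1 ∉ u.map Prod.fst) ∧
    𝒜.rel R (fun i => peps (v i))

/-- The prefix of `s` of length `i+1`. -/
def pPrefAt {k : ℕ} {A : Type} (s : PkC k A) (i : Fin s.1.length) : PkC k A :=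
  ⟨s.1.take (i + 1), by
    apply List.ne_nil_of_length_pos
    rw [List.length_take]
    exact lt_min (Nat.succ_pos _) (Nat.lt_of_le_of_lt (Nat.zero_le _) i.2)⟩

/-- The Kleisli coextension for the pebbling comonad. -/
def pcoext {k : ℕ} {A B : Type} (f : PkC k A → B) (s : PkC k A) : PkC k B :=
  ⟨List.ofFn (fun i : Fin s.1.length => ((s.1.get i).1, f (pPrefAt s i))), by
    apply List.ne_nil_of_length_pos
    rw [List.length_ofFn]
    exact List.length_pos_iff.mpr s.2⟩

/-- The adjacency relation of the Gaifman graph of `𝒜`. -/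
def gaif {σ : RelVocab} (𝒜 : RelStruct σ) (a a' : 𝒜.carrier) : Prop :=
  a ≠ a' ∧ ∃ (R : σ.Rel) (v : Fin (σ.ar R) → 𝒜.carrier),
    𝒜.rel R v ∧ (∃ i, v i = a) ∧ (∃ j, v j = a')

/-- A `P_k`-coalgebra on `𝒜`: a homomorphism `α : 𝒜 → P_k 𝒜` such that, writing
`α(a) = [(p_1,a_1),…,(p_j,a_j)]`, one has `a_j = a` and
`α(a_i) = [(p_1,a_1),…,(p_i,a_i)]` for `1 ≤ i ≤ j`. -/
structure PkCoalgebra {σ : RelVocab} (𝒜 : RelStruct σ) (k : ℕ) where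
  α : 𝒜.carrier → PkC k 𝒜.carrier
  hom : IsHom 𝒜 (Pk k 𝒜) α
  counit : ∀ a, peps (α a) = a
  comult : ∀ (a : 𝒜.carrier) (i : Fin (α a).1.length),
    (α ((α a).1.get i).2).1 = (α a).1.take (i + 1)

/-- A `k`-pebble forest cover of the graph `(V, adj)`: a forest order on `V` in which
adjacent vertices are comparable, together with a pebbling function `p : V → {1,…,k}`
such that if `v ⌢ v'` and `v ≤ v'`, then `p(v) ≠ p(w)` for all `w` with `v < w ≤ v'`. -/
structure PebbleForestCover (V : Type) (adj : V → V → Prop) (k : ℕ) where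
  le : V → V → Prop
  refl : ∀ a, le a a
  antisymm : ∀ a b, le a b → le b a → a = b
  trans : ∀ a b c, le a b → le b c → le a c
  pred_finite : ∀ a, {b | le b a}.Finite
  pred_chain : ∀ a, IsChain le {b | le b a}
  cover : ∀ a a', adj a a' → le a a' ∨ le a' a
  peb : V → Fin k
  peb_cond : ∀ v v' w, adj v v' → le v v' → le v w → v ≠ w → le w v' → peb v ≠ peb w

/-! ### Auxiliary development -/

namespace PFC12

open scoped Classical

variable {V : Type} {adj : V → V → Prop} {k : ℕ}

section Cover
variable (F : PebbleForestCover V adj k)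

/-- Rank: number of predecessors. -/
noncomputable def rk (a : V) : ℕ := (F.pred_finite a).toFinset.card

lemma pred_mono {a b : V} (h : F.le a b) : {c | F.le c a} ⊆ {c | F.le c b} :=
  fun c hc => F.trans c a b hc h

lemma rk_mono {a b : V} (h : F.le a b) : rk F a ≤ rk F b :=
  Finset.card_le_card (Set.Finite.toFinset_subset_toFinset.mpr (pred_mono F h))

lemma rk_lt {m a : V} (h1 : F.le m a) (h2 : m ≠ a) : rk F m < rk F a := by
  apply Finset.card_lt_card
  rw [Finset.ssubset_iff_of_subset (Set.Finite.toFinset_subset_toFinset.mpr (pred_mono F h1))]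
  refine ⟨a, ?_, ?_⟩
  · simp only [Set.Finite.mem_toFinset, Set.mem_setOf_eq]; exact F.refl a
  · simp only [Set.Finite.mem_toFinset, Set.mem_setOf_eq]
    intro hle
    exact h2 (F.antisymm m a h1 hle)

lemma le_total_of_le {a b c : V} (hb : F.le b a) (hc : F.le c a) :
    F.le b c ∨ F.le c b := by
  by_cases h : b = c
  · exact Or.inl (h ▸ F.refl b)
  · exact F.pred_chain a hb hc h

/-- Existence of a maximum strict predecessor. -/
lemma exists_max {a : V} (h : ∃ b, F.le b a ∧ b ≠ a) :
    ∃ m, (F.le m a ∧ m ≠ a) ∧ ∀ b, F.le b a → b ≠ a → F.le b m := by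
  obtain ⟨b0, hb0⟩ := h
  set s : Set V := {b | F.le b a ∧ b ≠ a} with hs
  have hfin : s.Finite := (F.pred_finite a).subset (fun x hx => hx.1)
  have hne : hfin.toFinset.Nonempty := ⟨b0, hfin.mem_toFinset.mpr hb0⟩
  obtain ⟨m, hm, hmax⟩ := Finset.exists_max_image hfin.toFinset (rk F) hne
  rw [hfin.mem_toFinset] at hm
  refine ⟨m, hm, fun b hba hbne => ?_⟩
  have hb : b ∈ s := ⟨hba, hbne⟩
  have hr : rk F b ≤ rk F m := hmax b (hfin.mem_toFinset.mpr hb)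
  rcases le_total_of_le F hba hm.1 with h | h
  · exact h
  · -- F.le m b with rk F b ≤ rk F m : sets equal
    have hsub : (F.pred_finite m).toFinset ⊆ (F.pred_finite b).toFinset :=
      Set.Finite.toFinset_subset_toFinset.mpr (pred_mono F h)
    have := Finset.eq_of_subset_of_card_le hsub hr
    have hbmem : b ∈ (F.pred_finite b).toFinset := by
      simp [Set.Finite.mem_toFinset]; exact F.refl b
    rw [← this, Set.Finite.mem_toFinset] at hbmem
    exact hbmem

/-- The chain of predecessors of `a`, listed in increasing order. -/
noncomputable def ch (F : PebbleForestCover V adj k) (a : V) : List V :=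
  if h : ∃ m, (F.le m a ∧ m ≠ a) ∧ ∀ b, F.le b a → b ≠ a → F.le b m then
    ch F h.choose ++ [a]
  else [a]
termination_by rk F a
decreasing_by exact rk_lt F h.choose_spec.1.1 h.choose_spec.1.2

lemma ch_concat (a : V) : ∃ l, ch F a = l ++ [a] := by
  rw [ch]
  split_ifs with h
  · exact ⟨_, rfl⟩
  · exact ⟨[], rfl⟩

lemma ch_ne_nil (a : V) : ch F a ≠ [] := by
  obtain ⟨l, hl⟩ := ch_concat F a
  simp [hl]

lemma ch_getLast (a : V) (h : ch F a ≠ []) : (ch F a).getLast h = a := by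
  obtain ⟨l, hl⟩ := ch_concat F a
  simp [hl, List.getLast_append]

lemma mem_ch (a : V) : ∀ x, x ∈ ch F a ↔ F.le x a := by
  intro x
  rw [ch]
  split_ifs with h
  · obtain ⟨⟨hma, hne⟩, hmax⟩ := h.choose_spec
    rw [List.mem_append, mem_ch h.choose x]
    simp only [List.mem_singleton]
    constructor
    · rintro (h1 | rfl)
      · exact F.trans _ _ _ h1 hma
      · exact F.refl x
    · intro hxa
      by_cases hx : x = a
      · exact Or.inr hx
      · exact Or.inl (hmax x hxa hx)
  · simp only [List.mem_singleton]
    constructor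
    · rintro rfl; exact F.refl x
    · intro hxa
      by_contra hne
      exact h (exists_max F ⟨x, hxa, hne⟩)
termination_by rk F a
decreasing_by exact rk_lt F h.choose_spec.1.1 h.choose_spec.1.2

lemma nodup_ch (a : V) : (ch F a).Nodup := by
  rw [ch]
  split_ifs with h
  · obtain ⟨⟨hma, hne⟩, hmax⟩ := h.choose_spec
    rw [List.nodup_append']
    refine ⟨nodup_ch _, List.nodup_singleton a, ?_⟩
    intro x hx hx2
    rw [List.mem_singleton] at hx2
    subst hx2
    rw [mem_ch] at hx
    exact hne (F.antisymm _ _ hma hx)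
  · exact List.nodup_singleton a
termination_by rk F a
decreasing_by exact rk_lt F h.choose_spec.1.1 h.choose_spec.1.2

lemma sorted_ch (a : V) : (ch F a).Pairwise F.le := by
  rw [ch]
  split_ifs with h
  · obtain ⟨⟨hma, hne⟩, hmax⟩ := h.choose_spec
    rw [List.pairwise_append]
    refine ⟨sorted_ch _, List.pairwise_singleton _ _, ?_⟩
    intro x hx y hy
    rw [List.mem_singleton] at hy
    subst hy
    rw [mem_ch] at hx
    exact F.trans _ _ _ hx hma
  · exact List.pairwise_singleton _ _
termination_by rk F a
decreasing_by exact rk_lt F h.choose_spec.1.1 h.choose_spec.1.2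

lemma ch_prefix {b a : V} (hba : F.le b a) : ch F b <+: ch F a := by
  by_cases heq : b = a
  · subst heq; exact List.prefix_refl _
  · have h : ∃ m, (F.le m a ∧ m ≠ a) ∧ ∀ b, F.le b a → b ≠ a → F.le b m :=
      exists_max F ⟨b, hba, heq⟩
    have hbm : F.le b h.choose := h.choose_spec.2 b hba heq
    have hrec : ch F b <+: ch F h.choose := ch_prefix hbm
    refine hrec.trans ?_
    conv_rhs => rw [ch]
    rw [dif_pos h]
    exact List.prefix_append _ _
termination_by rk F a
decreasing_by exact rk_lt F h.choose_spec.1.1 h.choose_spec.1.2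


lemma sorted_unique {l₁ l₂ : List V} (s₁ : l₁.Pairwise F.le) (s₂ : l₂.Pairwise F.le)
    (n₁ : l₁.Nodup) (n₂ : l₂.Nodup) (hm : ∀ x, x ∈ l₁ ↔ x ∈ l₂) : l₁ = l₂ := by
  haveI : Std.Antisymm F.le := ⟨F.antisymm⟩
  exact List.Perm.eq_of_pairwise' s₁ s₂ ((List.perm_ext_iff_of_nodup n₁ n₂).mpr hm)

lemma take_prefix_take {α : Type*} {l : List α} {m n : ℕ} (h : m ≤ n) :
    l.take m <+: l.take n := by
  have : l.take m = (l.take n).take m := by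
    rw [List.take_take, Nat.min_eq_left h]
  rw [this]
  exact List.take_prefix _ _

lemma ch_take (a : V) (i : Fin (ch F a).length) :
    ch F ((ch F a).get i) = (ch F a).take (i + 1) := by
  set b := (ch F a).get i with hb
  have hmem : b ∈ ch F a := List.get_mem _ _
  have hba : F.le b a := (mem_ch F a b).mp hmem
  have hpre : ch F b <+: ch F a := ch_prefix F hba
  set n := (ch F b).length with hn
  have hnpos : 0 < n := List.length_pos_iff.mpr (ch_ne_nil F b)
  have hnle : n ≤ (ch F a).length := hpre.length_le
  have heq : ch F b = (ch F a).take n := List.prefix_iff_eq_take.mp hpre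
  have h1 : ∀ hh : n - 1 < (ch F b).length, (ch F b)[n-1]'hh = b := by
    intro hh
    obtain ⟨l, hl⟩ := ch_concat F b
    have hln : n = l.length + 1 := by rw [hn, hl]; simp
    have : n - 1 = l.length := by omega
    simp only [hl, this, List.getElem_concat_length]
  have hlt : n - 1 < ((ch F a).take n).length := by
    simp only [List.length_take]
    omega
  have e1 : ((ch F a).take n)[n-1]'hlt = (ch F a)[n-1]'(by omega) := List.getElem_take
  have e2 : ((ch F a).take n)[n-1]'hlt = b := by
    have h2 := h1 (by omega)
    simp only [heq] at h2
    exact h2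
  have hlast : (ch F a).get ⟨n - 1, by omega⟩ = b := by
    rw [List.get_eq_getElem, ← e1, e2]
  have hidx : n - 1 = (i : ℕ) := by
    have h3 := (nodup_ch F a).get_inj_iff.mp (hlast.trans hb)
    exact congrArg Fin.val h3
  rw [heq]
  congr 1
  omega

end Cover

section Main

lemma gidx {α : Type*} (l : List α) {i j : ℕ} (h : i = j) {hi : i < l.length} :
    l[i]'hi = l[j]'(h ▸ hi) := by subst h; rfl

variable {σ : RelVocab} {𝒜 : RelStruct σ} {k : ℕ}

/-- The coalgebra map associated to a forest cover. -/
noncomputable def alphaOf (F : PebbleForestCover 𝒜.carrier (gaif 𝒜) k) (a : 𝒜.carrier) :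
    PkC k 𝒜.carrier :=
  ⟨(ch F a).map (fun x => (F.peb x, x)), by
    simp only [ne_eq, List.map_eq_nil_iff]
    exact ch_ne_nil F a⟩

variable (F : PebbleForestCover 𝒜.carrier (gaif 𝒜) k)

lemma alphaOf_val (a : 𝒜.carrier) :
    (alphaOf F a).1 = (ch F a).map (fun x => (F.peb x, x)) := rfl

lemma plast_alphaOf (a : 𝒜.carrier) : plast (alphaOf F a) = (F.peb a, a) := by
  show ((ch F a).map _).getLast (by simpa using ch_ne_nil F a) = _
  rw [List.getLast_map]
  rw [ch_getLast]

lemma peps_alphaOf (a : 𝒜.carrier) : peps (alphaOf F a) = a := by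
  unfold peps
  rw [plast_alphaOf]

lemma ch_eq_of_alpha_prefix {a b : 𝒜.carrier}
    (h : (alphaOf F a).1 ++ u = (alphaOf F b).1) :
    ch F b = ch F a ++ u.map Prod.snd := by
  have h2 := congrArg (List.map Prod.snd) h.symm
  simpa only [alphaOf_val, List.map_append, List.map_map, Function.comp_def, List.map_id',
    List.map_id''] using h2

/-- The coalgebra associated to a forest cover. -/
noncomputable def toCoalg : PkCoalgebra 𝒜 k where
  α := alphaOf F
  counit := peps_alphaOf F
  comult := by
    intro a i
    have hlen : ((alphaOf F a).1).length = (ch F a).length := by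
      rw [alphaOf_val, List.length_map]
    set i' : Fin (ch F a).length := ⟨i, by rw [← hlen]; exact i.2⟩ with hi'
    have hget : ((alphaOf F a).1.get i).2 = (ch F a).get i' := by
      simp only [alphaOf_val, List.get_eq_getElem, List.getElem_map]
      erw [List.get_eq_getElem, List.getElem_map]
    rw [hget]
    show ((ch F ((ch F a).get i')).map (fun x => (F.peb x, x)))
        = ((ch F a).map (fun x => (F.peb x, x))).take (↑i + 1)
    rw [ch_take F a i', List.map_take]
  hom := by
    intro R vv hrel
    refine ⟨?_, ?_, ?_⟩
    · -- comparability
      intro i j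
      show Cmp (alphaOf F (vv i)).1 (alphaOf F (vv j)).1
      by_cases h : vv i = vv j
      · rw [h]; exact Or.inl (List.prefix_refl _)
      · have hadj : gaif 𝒜 (vv i) (vv j) := ⟨h, R, vv, hrel, ⟨i, rfl⟩, ⟨j, rfl⟩⟩
        rcases F.cover _ _ hadj with hle | hle
        · exact Or.inl (List.IsPrefix.map _ (ch_prefix F hle))
        · exact Or.inr (List.IsPrefix.map _ (ch_prefix F hle))
    · -- pebble condition
      intro i j u hu
      intro hmem
      rw [plast_alphaOf] at hmem
      have hch : ch F (vv j) = ch F (vv i) ++ u.map Prod.snd :=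
        ch_eq_of_alpha_prefix F hu.symm
      -- u = map f (u.map snd)
      have hu2 : u = (u.map Prod.snd).map (fun x => (F.peb x, x)) := by
        have e1 : (alphaOf F (vv i)).1 ++ u
            = (alphaOf F (vv i)).1 ++ (u.map Prod.snd).map (fun x => (F.peb x, x)) := by
          rw [← hu, alphaOf_val, alphaOf_val, ← List.map_append, ← hch]
        exact List.append_cancel_left e1
      rw [hu2, List.map_map] at hmem
      obtain ⟨w, hwu, hwpeb0⟩ := List.mem_map.mp hmem
      have hwpeb : F.peb w = F.peb (vv i) := hwpeb0
      have hdisj : List.Disjoint (ch F (vv i)) (u.map Prod.snd) :=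
        (List.nodup_append'.mp (hch ▸ nodup_ch F (vv j))).2.2
      have hvimem : vv i ∈ ch F (vv i) := (mem_ch F _ _).mpr (F.refl _)
      have hwj : F.le w (vv j) := (mem_ch F _ _).mp (by rw [hch]; exact List.mem_append_right _ hwu)
      have hij : F.le (vv i) (vv j) := (mem_ch F _ _).mp (by rw [hch]; exact List.mem_append_left _ hvimem)
      have hwnotchi : w ∉ ch F (vv i) := fun hw => hdisj hw hwu
      have hwne : vv i ≠ w := fun h => hwnotchi (h ▸ hvimem)
      have hviw : F.le (vv i) w := by
        rcases le_total_of_le F hwj hij with h | h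
        · exact absurd ((mem_ch F _ _).mpr h) hwnotchi
        · exact h
      have hneij : vv i ≠ vv j := by
        intro h
        rw [← h] at hch
        have hnil : (u.map Prod.snd) = [] := by
          have h3 := congrArg List.length hch
          rw [List.length_append] at h3
          have h4 : (u.map Prod.snd).length = 0 := by omega
          exact List.eq_nil_of_length_eq_zero h4
        rw [hnil] at hwu
        exact absurd hwu List.not_mem_nil
      have hadj : gaif 𝒜 (vv i) (vv j) := ⟨hneij, R, vv, hrel, ⟨i, rfl⟩, ⟨j, rfl⟩⟩
      exact F.peb_cond (vv i) (vv j) w hadj hij hviw hwne hwj hwpeb.symm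
    · -- the underlying relation
      have he : (fun i => peps (alphaOf F (vv i))) = vv := funext fun i => peps_alphaOf F _
      rw [he]
      exact hrel

variable (C : PkCoalgebra 𝒜 k)

lemma alpha_inj : Function.Injective C.α := fun x y hxy => by
  rw [← C.counit x, ← C.counit y, hxy]

/-- The forest cover associated to a coalgebra. -/
noncomputable def toCov (hfin : Finite 𝒜.carrier) (C : PkCoalgebra 𝒜 k) :
    PebbleForestCover 𝒜.carrier (gaif 𝒜) k where
  le a b := (C.α a).1 <+: (C.α b).1
  refl a := List.prefix_refl _
  antisymm a b h1 h2 := by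
    have h3 : C.α a = C.α b :=
      Subtype.ext (h1.eq_of_length (Nat.le_antisymm h1.length_le h2.length_le))
    exact alpha_inj C h3
  trans a b c h1 h2 := h1.trans h2
  pred_finite a := by haveI := hfin; exact Set.toFinite _
  pred_chain a := fun x hx y hy hne => List.prefix_or_prefix_of_prefix hx hy
  cover a a' hadj := by
    obtain ⟨hne, R, vv, hrel, ⟨i, hi⟩, ⟨j, hj⟩⟩ := hadj
    have h1 : Cmp (C.α (vv i)).1 (C.α (vv j)).1 := (C.hom R vv hrel).1 i j
    rw [hi, hj] at h1
    exact h1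
  peb a := (plast (C.α a)).1
  peb_cond v v' w hadj hvv' hvw hnevw hwv' := by
    obtain ⟨hne, R, vv, hrel, ⟨i, hi⟩, ⟨j, hj⟩⟩ := hadj
    obtain ⟨u, hu⟩ := hvv'
    have h2 : (plast (C.α (vv i))).1 ∉ u.map Prod.fst :=
      (C.hom R vv hrel).2.1 i j u
        (show (C.α (vv j)).1 = (C.α (vv i)).1 ++ u by rw [hi, hj]; exact hu.symm)
    rw [hi] at h2
    intro hcontra
    have hcontra' : (plast (C.α v)).1 = (plast (C.α w)).1 := hcontra
    apply h2
    rw [hcontra']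
    -- plast (C.α w) ∈ u, so its first component is in u.map fst
    have hlv : (C.α v).1.length < (C.α w).1.length := by
      rcases Nat.lt_or_ge (C.α v).1.length (C.α w).1.length with h | h
      · exact h
      · exfalso
        have heq : (C.α v).1 = (C.α w).1 :=
          hvw.eq_of_length (Nat.le_antisymm hvw.length_le h)
        exact hnevw (alpha_inj C (Subtype.ext heq))
    obtain ⟨u2, hu2⟩ := hwv'
    have hwne := (C.α w).2
    have hwlenpos : 0 < (C.α w).1.length := List.length_pos_iff.mpr hwne
    have hlast : plast (C.α w) = (C.α w).1[(C.α w).1.length - 1]'(by omega) := by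
      unfold plast
      rw [List.getLast_eq_getElem]
    have e1 : ((C.α w).1 ++ u2)[(C.α w).1.length - 1]'(by rw [List.length_append]; omega)
        = (C.α w).1[(C.α w).1.length - 1]'(by omega) :=
      List.getElem_append_left (by omega)
    simp only [hu2] at e1
    have e2 : ((C.α v).1 ++ u)[(C.α w).1.length - 1]'(by rw [hu]; rw [← hu2, List.length_append]; omega)
        = u[((C.α w).1.length - 1) - (C.α v).1.length]'(by
            have := congrArg List.length hu
            rw [List.length_append] at this
            have h5 := congrArg List.length hu2
            rw [List.length_append] at h5
            omega) :=
      List.getElem_append_right (by omega)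
    simp only [hu] at e2
    have e3 : (C.α w).1[(C.α w).1.length - 1]'(by omega)
        = u[((C.α w).1.length - 1) - (C.α v).1.length]'(by
            have := congrArg List.length hu
            rw [List.length_append] at this
            have h5 := congrArg List.length hu2
            rw [List.length_append] at h5
            omega) := e1.symm.trans e2
    have hmem2 : plast (C.α w) ∈ u := by
      rw [hlast, e3]
      exact List.getElem_mem _
    exact List.mem_map_of_mem (f := Prod.fst) hmem2

lemma coalg_ext {C₁ C₂ : PkCoalgebra 𝒜 k} (h : C₁.α = C₂.α) : C₁ = C₂ := by
  cases C₁; cases C₂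
  simp only at h
  subst h
  rfl

lemma cov_ext {F₁ F₂ : PebbleForestCover 𝒜.carrier (gaif 𝒜) k}
    (hle : F₁.le = F₂.le) (hpeb : F₁.peb = F₂.peb) : F₁ = F₂ := by
  cases F₁; cases F₂
  simp only at hle hpeb
  subst hle; subst hpeb
  rfl

lemma alpha_prefix_iff (a b : 𝒜.carrier) :
    (alphaOf F a).1 <+: (alphaOf F b).1 ↔ F.le a b := by
  constructor
  · intro h
    have h2 := h.map Prod.snd
    rw [alphaOf_val, alphaOf_val, List.map_map, List.map_map] at h2
    simp only [Function.comp_def, List.map_id', List.map_id''] at h2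
    have h3 : a ∈ ch F b := h2.subset ((mem_ch F a a).mpr (F.refl a))
    exact (mem_ch F b a).mp h3
  · intro h
    exact (ch_prefix F h).map _

lemma plast_take (a : 𝒜.carrier) (i : Fin (C.α a).1.length) :
    plast (C.α ((C.α a).1.get i).2) = (C.α a).1.get i := by
  have hc := C.comult a i
  have hlen : (C.α ((C.α a).1.get i).2).1.length = i + 1 := by
    rw [hc, List.length_take]
    have := i.2
    omega
  unfold plast
  rw [List.getLast_eq_getElem]
  have e1 : ∀ hh : (C.α ((C.α a).1.get i).2).1.length - 1 < (C.α ((C.α a).1.get i).2).1.length,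
      (C.α ((C.α a).1.get i).2).1[(C.α ((C.α a).1.get i).2).1.length - 1]'hh
      = ((C.α a).1.take (i + 1))[(C.α ((C.α a).1.get i).2).1.length - 1]'(by
          rw [← hc]; exact hh) := by
    intro hh
    simp only [hc]
  rw [e1 (by omega)]
  have e2 : ((C.α a).1.take (i + 1))[(C.α ((C.α a).1.get i).2).1.length - 1]'(by
        rw [← hc]; omega)
      = (C.α a).1[(C.α ((C.α a).1.get i).2).1.length - 1]'(by
          have := i.2; omega) := List.getElem_take
  rw [e2]
  exact gidx _ (by omega)

lemma mapsnd_eq_ch (hfin : Finite 𝒜.carrier) (a : 𝒜.carrier) :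
    ch (toCov hfin C) a = (C.α a).1.map Prod.snd := by
  set G := toCov hfin C with hG
  have hGle : ∀ x y, G.le x y ↔ (C.α x).1 <+: (C.α y).1 := fun x y => Iff.rfl
  set l := (C.α a).1.map Prod.snd with hl
  have hlen : l.length = (C.α a).1.length := by rw [hl, List.length_map]
  have hget : ∀ i : Fin l.length, l.get i = ((C.α a).1.get ⟨i, by rw [← hlen]; exact i.2⟩).2 := by
    intro i
    simp only [hl, List.get_eq_getElem, List.getElem_map]
  have halph : ∀ i : Fin l.length, (C.α (l.get i)).1 = (C.α a).1.take (i + 1) := by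
    intro i
    rw [hget i]
    exact C.comult a ⟨i, by rw [← hlen]; exact i.2⟩
  apply sorted_unique G (sorted_ch G a) ?_ (nodup_ch G a) ?_ ?_
  · -- pairwise
    rw [List.pairwise_iff_get]
    intro i j hij
    rw [hGle, halph i, halph j]
    exact take_prefix_take (by omega)
  · -- nodup
    rw [List.nodup_iff_injective_get]
    intro i j hij
    have h1 : (C.α (l.get i)).1 = (C.α (l.get j)).1 := by rw [hij]
    rw [halph i, halph j] at h1
    have h2 := congrArg List.length h1
    rw [List.length_take, List.length_take] at h2
    have hi2 := i.2
    have hj2 := j.2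
    have : (i : ℕ) = j := by omega
    exact Fin.ext this
  · -- same members
    intro x
    rw [mem_ch]
    constructor
    · intro hx
      rw [hGle] at hx
      have hxne := (C.α x).2
      have hxpos : 0 < (C.α x).1.length := List.length_pos_iff.mpr hxne
      obtain ⟨n, hn⟩ : ∃ n, (C.α x).1.length = n := ⟨_, rfl⟩
      have hnpos : 0 < n := hn ▸ hxpos
      have hxlen : n ≤ (C.α a).1.length := hn ▸ hx.length_le
      have hxtake : (C.α x).1 = (C.α a).1.take n := by
        rw [← hn]
        exact List.prefix_iff_eq_take.mp hx
      have e0 : ∀ hh : n - 1 < (C.α x).1.length,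
          (C.α x).1[n-1]'hh = ((C.α a).1.take n)[n-1]'(by rw [← hxtake]; exact hh) := by
        intro hh
        simp only [hxtake]
      have e1 : ((C.α a).1.take n)[n-1]'(by rw [List.length_take]; omega)
          = (C.α a).1[n-1]'(by omega) := List.getElem_take
      have hxx : x = ((C.α a).1.get ⟨n - 1, by omega⟩).2 := by
        conv_lhs => rw [← C.counit x]
        unfold peps plast
        rw [List.getLast_eq_getElem]
        congr 1
        rw [gidx _ (show (C.α x).1.length - 1 = n - 1 by omega), e0 _, e1]
        rfl
      rw [hxx]
      rw [hl]
      apply List.mem_map_of_mem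
      exact List.get_mem _ _
    · intro hx
      obtain ⟨i, hi⟩ := List.mem_iff_get.mp hx
      rw [hGle, ← hi, halph i]
      exact List.take_prefix _ _

lemma left_inv_aux (hfin : Finite 𝒜.carrier) : toCoalg (toCov hfin C) = C := by
  apply coalg_ext
  funext a
  apply Subtype.ext
  show (alphaOf (toCov hfin C) a).1 = (C.α a).1
  rw [alphaOf_val, mapsnd_eq_ch C hfin a, List.map_map]
  apply List.ext_get (by simp)
  intro i h1 h2
  simp only [List.get_eq_getElem, List.getElem_map]
  -- goal: ((toCov hfin C).peb (C.α a).1[i].2, (C.α a).1[i].2) = (C.α a).1[i]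
  have hp := plast_take C a ⟨i, h2⟩
  show ((plast (C.α ((C.α a).1[i]'h2).2)).1, ((C.α a).1[i]'h2).2) = (C.α a).1[i]'h2
  rw [show ((C.α a).1[i]'h2) = (C.α a).1.get ⟨i, h2⟩ from rfl, hp]

lemma right_inv_aux (hfin : Finite 𝒜.carrier) (F : PebbleForestCover 𝒜.carrier (gaif 𝒜) k) :
    toCov hfin (toCoalg F) = F := by
  apply cov_ext
  · funext a b
    apply propext
    show ((toCoalg F).α a).1 <+: ((toCoalg F).α b).1 ↔ F.le a b
    exact alpha_prefix_iff F a b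
  · funext a
    show (plast ((toCoalg F).α a)).1 = F.peb a
    show (plast (alphaOf F a)).1 = F.peb a
    rw [plast_alphaOf]

end Main

end PFC12

/-- There is a bijective correspondence between `P_k`-coalgebras on a finite structure
`𝒜` and `k`-pebble forest covers of its Gaifman graph. -/
theorem stmt12 (σ : RelVocab) (𝒜 : RelStruct σ) (hfin : Finite 𝒜.carrier)
    (k : ℕ) (hk : 1 ≤ k) :
    Nonempty (PkCoalgebra 𝒜 k ≃ PebbleForestCover 𝒜.carrier (gaif 𝒜) k) := by
  exact ⟨{ toFun := fun C => PFC12.toCov hfin C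
           invFun := fun F => PFC12.toCoalg F
           left_inv := fun C => PFC12.left_inv_aux C hfin
           right_inv := fun F => PFC12.right_inv_aux hfin F }⟩
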